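/- Any two left quotients of a product of atoms are comparable under inclusion: if I is a product of atoms and R₁ = I/x, R₂ = I/y, then R₁ ⊆ R₂ or R₂ ⊆ R₁. -/

import Mathlib

inductive Atom (α : Type*) where
  | letter (a : α) : Atom α
  | star (B : Set α) : Atom α

def Atom.lang {α : Type*} : Atom α → Set (List α)
  | .letter a => {[a], []}
  | .star B => {w | ∀ c ∈ w, c ∈ B}

def prodLang {α : Type*} : List (Atom α) → Set (List α)
  | [] => {[]}
  | A :: I => Set.image2 (· ++ ·) A.lang (prodLang I)

def quot {α : Type*} (L : Set (List α)) (u : List α) : Set (List α) :=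
  {w | u ++ w ∈ L}

lemma nil_mem_atom {α : Type*} (A : Atom α) : [] ∈ A.lang := by
  cases A <;> simp [Atom.lang]

lemma prod_mono {α : Type*} {J I : List (Atom α)} (h : J <:+ I) :
    prodLang J ⊆ prodLang I := by
  induction I with
  | nil => rw [List.suffix_nil.mp h]
  | cons A I ih =>
    rcases h with ⟨t, ht⟩
    cases t with
    | nil => simp at ht; subst ht; rfl
    | cons B t =>
      intro w hw
      simp only [List.cons_append, List.cons.injEq] at ht
      exact ⟨[], nil_mem_atom A, w, ih ⟨t, ht.2⟩ hw, rfl⟩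

lemma quot_cons {α : Type*} (L : Set (List α)) (a : α) (x : List α) :
    quot L (a :: x) = quot (quot L [a]) x := by
  ext w; simp [quot]

lemma quot_empty {α : Type*} (x : List α) : quot (∅ : Set (List α)) x = ∅ := by
  ext w; simp [quot]

lemma quot_single {α : Type*} (I : List (Atom α)) (a : α) :
    quot (prodLang I) [a] = ∅ ∨
      ∃ J, J <:+ I ∧ quot (prodLang I) [a] = prodLang J := by
  induction I with
  | nil =>
    left; ext w; simp [quot, prodLang]
  | cons A I ih =>
    have hsub : quot (prodLang I) [a] ⊆ prodLang I := by
      rcases ih with h | ⟨J, hJ, h⟩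
      · rw [h]; exact Set.empty_subset _
      · rw [h]; exact prod_mono hJ
    cases A with
    | letter b =>
      by_cases hab : a = b
      · right
        refine ⟨I, ⟨[Atom.letter b], rfl⟩, ?_⟩
        ext w
        constructor
        · rintro ⟨p, hp, q, hq, hpq⟩
          rcases hp with hp | hp
          · subst hp
            simp only [List.cons_append, List.nil_append, List.cons.injEq] at hpq
            rw [← hpq.2]; exact hq
          · subst hp
            simp only [List.nil_append] at hpq
            apply hsub
            show [a] ++ w ∈ prodLang I
            rw [hpq] at hq; simpa using hq
        · intro hw
          exact ⟨[b], Or.inl rfl, w, hw, by rw [hab]⟩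
      · have heq : quot (prodLang (Atom.letter b :: I)) [a] = quot (prodLang I) [a] := by
          ext w
          constructor
          · rintro ⟨p, hp, q, hq, hpq⟩
            rcases hp with hp | hp
            · subst hp
              simp only [List.cons_append, List.nil_append, List.cons.injEq] at hpq
              exact absurd hpq.1.symm hab
            · subst hp
              simp only [List.nil_append] at hpq
              show [a] ++ w ∈ prodLang I
              rw [hpq] at hq; simpa using hq
          · intro hw
            exact ⟨[], Or.inr rfl, a :: w, hw, rfl⟩
        rcases ih with h | ⟨J, hJ, h⟩
        · left; rw [heq, h]
        · right; exact ⟨J, hJ.trans (List.suffix_cons _ _), by rw [heq, h]⟩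
    | star B =>
      by_cases haB : a ∈ B
      · right
        refine ⟨Atom.star B :: I, List.suffix_rfl, ?_⟩
        ext w
        constructor
        · rintro ⟨p, hp, q, hq, hpq⟩
          cases p with
          | nil =>
            simp only [List.nil_append] at hpq
            have : w ∈ quot (prodLang I) [a] := by
              show [a] ++ w ∈ prodLang I
              rw [hpq] at hq; simpa using hq
            exact prod_mono (List.suffix_cons _ _) (hsub this)
          | cons c p =>
            simp only [List.cons_append, List.cons.injEq] at hpq
            refine ⟨p, fun x hx => hp x (List.mem_cons_of_mem _ hx), q, hq, hpq.2⟩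
        · rintro ⟨p, hp, q, hq, rfl⟩
          refine ⟨a :: p, ?_, q, hq, rfl⟩
          intro x hx
          rcases List.mem_cons.mp hx with rfl | hx
          · exact haB
          · exact hp x hx
      · have heq : quot (prodLang (Atom.star B :: I)) [a] = quot (prodLang I) [a] := by
          ext w
          constructor
          · rintro ⟨p, hp, q, hq, hpq⟩
            cases p with
            | nil =>
              simp only [List.nil_append] at hpq
              show [a] ++ w ∈ prodLang I
              rw [hpq] at hq; simpa using hq
            | cons c p =>
              simp only [List.cons_append, List.cons.injEq] at hpq
              exact absurd (hpq.1 ▸ hp c List.mem_cons_self) haB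
          · intro hw
            exact ⟨[], fun x hx => absurd hx List.not_mem_nil, a :: w, hw, rfl⟩
        rcases ih with h | ⟨J, hJ, h⟩
        · left; rw [heq, h]
        · right; exact ⟨J, hJ.trans (List.suffix_cons _ _), by rw [heq, h]⟩

lemma quot_prod {α : Type*} (x : List α) (I : List (Atom α)) :
    quot (prodLang I) x = ∅ ∨
      ∃ J, J <:+ I ∧ quot (prodLang I) x = prodLang J := by
  induction x generalizing I with
  | nil => right; exact ⟨I, List.suffix_rfl, by ext w; simp [quot]⟩
  | cons a x ihx =>
    rcases quot_single I a with h | ⟨J, hJ, h⟩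
    · left; rw [quot_cons, h, quot_empty]
    · rw [quot_cons, h]
      rcases ihx J with h' | ⟨K, hK, h'⟩
      · left; exact h'
      · right; exact ⟨K, hK.trans hJ, h'⟩

/-- Any two quotients of a product of atoms are comparable under inclusion. -/
theorem quot_prodLang_comparable {α : Type*} (I : List (Atom α)) (x y : List α) :
    quot (prodLang I) x ⊆ quot (prodLang I) y ∨
      quot (prodLang I) y ⊆ quot (prodLang I) x := by
  rcases quot_prod x I with hx | ⟨J, hJ, hx⟩
  · left; rw [hx]; exact Set.empty_subset _
  · rcases quot_prod y I with hy | ⟨K, hK, hy⟩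
    · right; rw [hy]; exact Set.empty_subset _
    · rw [hx, hy]
      rcases List.suffix_or_suffix_of_suffix hJ hK with h | h
      · left; exact prod_mono h
      · right; exact prod_mono h
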